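/- arXiv:2312.17024 — 2 statements merged into one kernel-verified Lean document; each statement's English description precedes it below -/
import Mathlib

section
/- Let p be a real number with 0 < p < 1, let N be a real number, and define k_α = −(1−p)² and k_β = (1−p)·((1−p)(N−1) + 2). Then the series ∑_{n=1}^∞ (k_α·n + k_β)·pⁿ·(n−1) converges and its sum equals p²·(N−1). -/
/-- The key limit computation: `∑_{n=1}^∞ (kα n + kβ) pⁿ (n-1) = p² (N-1)`,
where `kα = -(1-p)²` and `kβ = (1-p)((1-p)(N-1)+2)`. The sum over `n ≥ 1` is
expressed by shifting the index. -/
theorem sum_rle_savings (p N : ℝ) (hp0 : 0 < p) (hp1 : p < 1)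
    (kα kβ : ℝ) (hkα : kα = -(1 - p) ^ 2)
    (hkβ : kβ = (1 - p) * ((1 - p) * (N - 1) + 2)) :
    HasSum (fun n : ℕ =>
        (kα * ((n : ℝ) + 1) + kβ) * p ^ (n + 1) * (((n : ℝ) + 1) - 1))
      (p ^ 2 * (N - 1)) := by
  have hr : ‖p‖ < 1 := by rw [Real.norm_eq_abs, abs_of_pos hp0]; exact hp1
  have h2 := hasSum_choose_mul_geometric_of_norm_lt_one (𝕜 := ℝ) 2 hr
  have h1 := hasSum_choose_mul_geometric_of_norm_lt_one (𝕜 := ℝ) 1 hr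
  have h0 := hasSum_geometric_of_norm_lt_one hr
  have H := ((h2.mul_left (2*p*kα)).add (h1.mul_left (p*kβ - 2*p*kα))).add
    (h0.mul_left (-(p*kβ)))
  have hne : (1:ℝ) - p ≠ 0 := by linarith
  convert H using 1
  · rfl
  · funext n
    have hc2 : (((n+2).choose 2 : ℕ) : ℝ) = ((n:ℝ)+2) * ((n:ℝ)+1) / 2 := by
      rw [Nat.cast_choose_two]; push_cast; ring
    have hc1 : (((n+1).choose 1 : ℕ) : ℝ) = (n:ℝ)+1 := by
      rw [Nat.choose_one_right]; push_cast; ring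
    rw [hc2, hc1, pow_succ]
    ring
  · subst hkα hkβ
    field_simp
    ring
end

section
/- Let S be a finite nonempty type, μ a probability measure on S, x ∈ S with μ({x}) = p, let N ≥ 3 and b_r ≥ 1 be natural numbers. Equip Ω = (Fin N → S) with the product measure of N copies of μ. For 1 ≤ n ≤ N, let C_n(ω) be the number of maximal runs of the symbol x of length exactly n in ω. Then the expected value of the random variable ∑_{n=1}^{N} C_n(ω)·(n − ⌈n/2^{b_r}⌉) equals ∑_{n=1}^{N−2} ((1−p)²·pⁿ·(N−1−n) + 2·pⁿ·(1−p))·(n − ⌈n/2^{b_r}⌉) + 2·p^{N−1}·(1−p)·(N−1 − ⌈(N−1)/2^{b_r}⌉) + p^N·(N − ⌈N/2^{b_r}⌉). -/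
open MeasureTheory

/-- The number of maximal runs of the symbol `x` of length exactly `n` in the
sequence `ω : Fin N → S`: the number of starting indices `i` with `0 ≤ i ≤ N - n`
such that `ω j = x` for all `i ≤ j < i + n`, the run cannot be extended on the
left (`i = 0` or `ω (i-1) ≠ x`), and cannot be extended on the right
(`i + n = N` or `ω (i+n) ≠ x`). -/
def runCount {S : Type*} [DecidableEq S] {N : ℕ} (x : S) (n : ℕ)
    (ω : Fin N → S) : ℕ :=
  ((Finset.range (N - n + 1)).filter (fun i =>
    (∀ j : Fin N, i ≤ (j : ℕ) → (j : ℕ) < i + n → ω j = x) ∧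
    (i = 0 ∨ ∀ j : Fin N, (j : ℕ) + 1 = i → ω j ≠ x) ∧
    (i + n = N ∨ ∀ j : Fin N, (j : ℕ) = i + n → ω j ≠ x))).card

/-- The cylinder set describing a maximal run of `x` of length `n` starting at `i`. -/
def runSet {S : Type*} (x : S) (N n i : ℕ) : Fin N → Set S :=
  fun j => if i ≤ (j : ℕ) ∧ (j : ℕ) < i + n then {x}
    else if (j : ℕ) + 1 = i ∨ (j : ℕ) = i + n then {x}ᶜ else Set.univ

lemma runSet_measurable {S : Type*} [MeasurableSpace S] [MeasurableSingletonClass S]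
    (x : S) (N n i : ℕ) (j : Fin N) : MeasurableSet (runSet x N n i j) := by
  unfold runSet
  split_ifs
  · exact measurableSet_singleton x
  · exact (measurableSet_singleton x).compl
  · exact MeasurableSet.univ

lemma mem_runSet {S : Type*} (x : S) {N : ℕ} (n i : ℕ) (ω : Fin N → S) :
    ω ∈ Set.univ.pi (runSet x N n i) ↔
      ((∀ j : Fin N, i ≤ (j : ℕ) → (j : ℕ) < i + n → ω j = x) ∧
       (i = 0 ∨ ∀ j : Fin N, (j : ℕ) + 1 = i → ω j ≠ x) ∧
       (i + n = N ∨ ∀ j : Fin N, (j : ℕ) = i + n → ω j ≠ x)) := by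
  rw [Set.mem_univ_pi]
  constructor
  · intro h
    refine ⟨fun j h1 h2 => ?_, Or.inr fun j hj => ?_, Or.inr fun j hj => ?_⟩
    · have := h j; rw [runSet, if_pos ⟨h1, h2⟩] at this; exact this
    · have := h j; rw [runSet, if_neg (by omega), if_pos (Or.inl hj)] at this; exact this
    · have := h j; rw [runSet, if_neg (by omega), if_pos (Or.inr hj)] at this; exact this
  · rintro ⟨h1, h2, h3⟩ j
    simp only [runSet]
    split_ifs with hA hB
    · exact h1 j hA.1 hA.2
    · rcases hB with hB | hB
      · rcases h2 with h2 | h2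
        · omega
        · exact h2 j hB
      · rcases h3 with h3 | h3
        · have := j.isLt; omega
        · exact h3 j hB
    · trivial

lemma measure_runSet {S : Type*} [MeasurableSpace S] [MeasurableSingletonClass S]
    (μ : Measure S) [IsProbabilityMeasure μ] (x : S) (N n i : ℕ)
    (hiN : i + n ≤ N) :
    (Measure.pi fun _ : Fin N => μ) (Set.univ.pi (runSet x N n i)) =
      (μ {x}) ^ n * ((if i = 0 then 1 else μ {x}ᶜ) * (if i + n = N then 1 else μ {x}ᶜ)) := by
  rw [Measure.pi_pi]
  have hA : ∏ j : Fin N, μ (runSet x N n i j) =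
      ∏ k ∈ Finset.range N, (if i ≤ k ∧ k < i + n then μ {x}
        else if k + 1 = i ∨ k = i + n then μ {x}ᶜ else 1) := by
    rw [← Fin.prod_univ_eq_prod_range]
    refine Finset.prod_congr rfl fun j _ => ?_
    simp only [runSet]
    split_ifs <;> simp
  rw [hA, Finset.range_eq_Ico,
    ← Finset.prod_Ico_consecutive _ (Nat.zero_le i) (by omega : i ≤ N),
    ← Finset.prod_Ico_consecutive _ (by omega : i ≤ i + n) hiN]
  have hmid : (∏ k ∈ Finset.Ico i (i + n), (if i ≤ k ∧ k < i + n then μ {x}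
      else if k + 1 = i ∨ k = i + n then μ {x}ᶜ else 1)) = μ {x} ^ n := by
    rw [Finset.prod_congr rfl (fun k hk => ?_), Finset.prod_const, Nat.card_Ico,
      Nat.add_sub_cancel_left]
    rw [Finset.mem_Ico] at hk
    exact if_pos ⟨hk.1, hk.2⟩
  have hleft : (∏ k ∈ Finset.Ico 0 i, (if i ≤ k ∧ k < i + n then μ {x}
      else if k + 1 = i ∨ k = i + n then μ {x}ᶜ else 1)) =
      if i = 0 then 1 else μ {x}ᶜ := by
    by_cases hi : i = 0
    · simp [hi]
    · rw [if_neg hi]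
      have hcg : ∀ k ∈ Finset.Ico 0 i, (if i ≤ k ∧ k < i + n then μ {x}
          else if k + 1 = i ∨ k = i + n then μ {x}ᶜ else 1) =
          if k = i - 1 then μ {x}ᶜ else 1 := by
        intro k hk
        rw [Finset.mem_Ico] at hk
        rw [if_neg (by omega)]
        by_cases hk1 : k = i - 1
        · rw [if_pos (by omega), if_pos hk1]
        · rw [if_neg (by omega), if_neg hk1]
      rw [Finset.prod_congr rfl hcg,
        Finset.prod_ite_eq' (Finset.Ico 0 i) (i - 1) (fun _ => μ {x}ᶜ),
        if_pos (by rw [Finset.mem_Ico]; omega)]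
  have hright : (∏ k ∈ Finset.Ico (i + n) N, (if i ≤ k ∧ k < i + n then μ {x}
      else if k + 1 = i ∨ k = i + n then μ {x}ᶜ else 1)) =
      if i + n = N then 1 else μ {x}ᶜ := by
    by_cases hIN : i + n = N
    · simp [hIN]
    · rw [if_neg hIN]
      have hcg : ∀ k ∈ Finset.Ico (i + n) N, (if i ≤ k ∧ k < i + n then μ {x}
          else if k + 1 = i ∨ k = i + n then μ {x}ᶜ else 1) =
          if k = i + n then μ {x}ᶜ else 1 := by
        intro k hk
        rw [Finset.mem_Ico] at hk
        rw [if_neg (by omega)]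
        by_cases hk1 : k = i + n
        · rw [if_pos (Or.inr hk1), if_pos hk1]
        · rw [if_neg (by omega), if_neg hk1]
      rw [Finset.prod_congr rfl hcg,
        Finset.prod_ite_eq' (Finset.Ico (i + n) N) (i + n) (fun _ => μ {x}ᶜ),
        if_pos (by rw [Finset.mem_Ico]; omega)]
  rw [hmid, hleft, hright]
  ring

lemma sum_boundary (p : ℝ) (N n : ℕ) (hn : n < N) :
    (∑ i ∈ Finset.range (N - n + 1),
      p ^ n * ((if i = 0 then (1 : ℝ) else 1 - p) * (if i + n = N then (1 : ℝ) else 1 - p))) =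
    ((N - n - 1 : ℕ) : ℝ) * ((1 - p) ^ 2 * p ^ n) + 2 * (p ^ n * (1 - p)) := by
  obtain ⟨m, hm⟩ : ∃ m, N - n = m + 1 := ⟨N - n - 1, by omega⟩
  rw [hm, Finset.sum_range_succ', Finset.sum_range_succ]
  have h1 : ∀ i ∈ Finset.range m,
      p ^ n * ((if i + 1 = 0 then (1 : ℝ) else 1 - p) *
        (if i + 1 + n = N then (1 : ℝ) else 1 - p)) = p ^ n * ((1 - p) * (1 - p)) := by
    intro i hi
    rw [Finset.mem_range] at hi
    rw [if_neg (by omega), if_neg (by omega)]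
  rw [Finset.sum_congr rfl h1, Finset.sum_const, Finset.card_range,
    if_neg (by omega : ¬ m + 1 = 0), if_pos (by omega : m + 1 + n = N),
    if_pos rfl, if_neg (by omega : ¬ 0 + n = N)]
  rw [show (m + 1 - 1 : ℕ) = m from rfl, nsmul_eq_mul]
  ring

/-- The expected RLE savings: for an i.i.d. sequence of length `N ≥ 3` and
run-control width `b_r ≥ 1`, the expectation of
`∑_{n=1}^{N} C_n(ω) (n - ⌈n/2^{b_r}⌉)` equals
`∑_{n=1}^{N-2} ((1-p)² pⁿ (N-1-n) + 2 pⁿ (1-p)) (n - ⌈n/2^{b_r}⌉)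
  + 2 p^{N-1} (1-p) (N-1 - ⌈(N-1)/2^{b_r}⌉) + p^N (N - ⌈N/2^{b_r}⌉)`. -/
theorem expected_rle_savings {S : Type*} [Fintype S] [Nonempty S]
    [DecidableEq S] [MeasurableSpace S] [MeasurableSingletonClass S]
    (μ : Measure S) [IsProbabilityMeasure μ] (x : S) (p : ℝ)
    (hp : (μ {x}).toReal = p) (N br : ℕ) (hN : 3 ≤ N) (hbr : 1 ≤ br) :
    ∫ ω : Fin N → S,
        (∑ n ∈ Finset.Icc 1 N,
          (runCount x n ω : ℝ) * ((n : ℝ) - (⌈(n : ℝ) / 2 ^ br⌉ : ℝ)))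
        ∂(Measure.pi fun _ : Fin N => μ) =
      (∑ n ∈ Finset.Icc 1 (N - 2),
          ((1 - p) ^ 2 * p ^ n * ((N : ℝ) - 1 - (n : ℝ)) + 2 * p ^ n * (1 - p)) *
            ((n : ℝ) - (⌈(n : ℝ) / 2 ^ br⌉ : ℝ))) +
        2 * p ^ (N - 1) * (1 - p) *
          (((N : ℝ) - 1) - (⌈((N : ℝ) - 1) / 2 ^ br⌉ : ℝ)) +
        p ^ N * ((N : ℝ) - (⌈(N : ℝ) / 2 ^ br⌉ : ℝ)) := by
  classical
  obtain ⟨M, rfl⟩ : ∃ M, N = M + 3 := ⟨N - 3, by omega⟩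
  have hp1 : (μ {x}ᶜ).toReal = 1 - p := by
    rw [measure_compl (measurableSet_singleton x) (measure_ne_top μ _), measure_univ,
      ENNReal.toReal_sub_of_le prob_le_one ENNReal.one_ne_top, ENNReal.toReal_one, hp]
  have hEm : ∀ n i : ℕ, MeasurableSet (Set.univ.pi (runSet x (M + 3) n i)) :=
    fun n i => MeasurableSet.univ_pi (fun j => runSet_measurable x (M + 3) n i j)
  set c : ℕ → ℝ := fun n => (n : ℝ) - (⌈(n : ℝ) / 2 ^ br⌉ : ℝ) with hc
  have hrc : ∀ (n : ℕ) (ω : Fin (M + 3) → S),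
      (runCount x n ω : ℝ) * c n =
      ∑ i ∈ Finset.range (M + 3 - n + 1),
        (Set.univ.pi (runSet x (M + 3) n i)).indicator (fun _ => c n) ω := by
    intro n ω
    rw [runCount, Finset.card_filter, Nat.cast_sum, Finset.sum_mul]
    refine Finset.sum_congr rfl fun i _ => ?_
    rw [Set.indicator_apply]
    by_cases h : ω ∈ Set.univ.pi (runSet x (M + 3) n i)
    · rw [if_pos ((mem_runSet x n i ω).mp h), if_pos h]; norm_num
    · rw [if_neg (fun hP => h ((mem_runSet x n i ω).mpr hP)), if_neg h]; norm_num
  have step2 : (∫ ω : Fin (M + 3) → S,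
      (∑ n ∈ Finset.Icc 1 (M + 3), (runCount x n ω : ℝ) * c n)
      ∂(Measure.pi fun _ : Fin (M + 3) => μ)) =
      ∑ n ∈ Finset.Icc 1 (M + 3), ∑ i ∈ Finset.range (M + 3 - n + 1),
        ((Measure.pi fun _ : Fin (M + 3) => μ) (Set.univ.pi (runSet x (M + 3) n i))).toReal
          * c n := by
    simp_rw [hrc]
    rw [integral_finset_sum _
      (fun n _ => integrable_finset_sum _ fun i _ => (integrable_const _).indicator (hEm n i))]
    refine Finset.sum_congr rfl fun n _ => ?_
    rw [integral_finset_sum _ (fun i _ => (integrable_const _).indicator (hEm n i))]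
    refine Finset.sum_congr rfl fun i _ => ?_
    rw [integral_indicator_const _ (hEm n i), smul_eq_mul]; rfl
  rw [step2]
  have step3 : ∀ n ∈ Finset.Icc 1 (M + 3), ∀ i ∈ Finset.range (M + 3 - n + 1),
      ((Measure.pi fun _ : Fin (M + 3) => μ) (Set.univ.pi (runSet x (M + 3) n i))).toReal =
      p ^ n * ((if i = 0 then (1 : ℝ) else 1 - p) * (if i + n = M + 3 then (1 : ℝ) else 1 - p)) := by
    intro n hn i hi
    rw [Finset.mem_Icc] at hn
    rw [Finset.mem_range] at hi
    rw [measure_runSet μ x (M + 3) n i (by omega), ENNReal.toReal_mul, ENNReal.toReal_mul,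
      ENNReal.toReal_pow, hp, apply_ite ENNReal.toReal, apply_ite ENNReal.toReal,
      ENNReal.toReal_one, hp1]
  rw [Finset.sum_congr rfl (fun n hn => Finset.sum_congr rfl (fun i hi =>
    congrArg (· * c n) (step3 n hn i hi)))]
  -- now pure algebra
  have hpeel : ∀ f : ℕ → ℝ, (∑ n ∈ Finset.Icc 1 (M + 3), f n) =
      (∑ n ∈ Finset.Icc 1 (M + 1), f n) + f (M + 2) + f (M + 3) := by
    intro f
    rw [show M + 3 = (M + 2) + 1 from rfl, Finset.sum_Icc_succ_top (by omega),
      show M + 2 = (M + 1) + 1 from rfl, Finset.sum_Icc_succ_top (by omega)]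
  rw [hpeel]
  have hmain : ∀ n ∈ Finset.Icc 1 (M + 1),
      (∑ i ∈ Finset.range (M + 3 - n + 1),
        p ^ n * ((if i = 0 then (1 : ℝ) else 1 - p) *
          (if i + n = M + 3 then (1 : ℝ) else 1 - p)) * c n) =
      ((1 - p) ^ 2 * p ^ n * ((↑(M + 3) : ℝ) - 1 - (n : ℝ)) + 2 * p ^ n * (1 - p)) *
        ((n : ℝ) - (⌈(n : ℝ) / 2 ^ br⌉ : ℝ)) := by
    intro n hn
    rw [Finset.mem_Icc] at hn
    simp only [hc]
    rw [← Finset.sum_mul, sum_boundary p (M + 3) n (by omega)]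
    have h1 : ((M + 3 - n - 1 : ℕ) : ℝ) = (↑(M + 3) : ℝ) - 1 - (n : ℝ) := by
      rw [show (M + 3 - n - 1 : ℕ) = M + 2 - n by omega, Nat.cast_sub (by omega)]
      push_cast; ring
    rw [h1]; ring
  rw [Finset.sum_congr rfl hmain]
  have hb : (∑ i ∈ Finset.range (M + 3 - (M + 2) + 1),
      p ^ (M + 2) * ((if i = 0 then (1 : ℝ) else 1 - p) *
        (if i + (M + 2) = M + 3 then (1 : ℝ) else 1 - p)) * c (M + 2)) =
      2 * p ^ (M + 3 - 1) * (1 - p) *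
        (((↑(M + 3) : ℝ) - 1) - (⌈((↑(M + 3) : ℝ) - 1) / 2 ^ br⌉ : ℝ)) := by
    simp only [hc]
    rw [← Finset.sum_mul, sum_boundary p (M + 3) (M + 2) (by omega)]
    have harg : ((M + 3 : ℕ) : ℝ) - 1 = ((M + 2 : ℕ) : ℝ) := by push_cast; ring
    rw [harg, show (M + 3 - (M + 2) - 1 : ℕ) = 0 by omega, show (M + 3 - 1 : ℕ) = M + 2 by omega]
    push_cast
    ring
  have hcN : (∑ i ∈ Finset.range (M + 3 - (M + 3) + 1),
      p ^ (M + 3) * ((if i = 0 then (1 : ℝ) else 1 - p) *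
        (if i + (M + 3) = M + 3 then (1 : ℝ) else 1 - p)) * c (M + 3)) =
      p ^ (M + 3) * ((↑(M + 3) : ℝ) - (⌈(↑(M + 3) : ℝ) / 2 ^ br⌉ : ℝ)) := by
    simp only [hc]
    rw [show M + 3 - (M + 3) + 1 = 1 by omega, Finset.sum_range_one,
      if_pos rfl, if_pos (by omega : 0 + (M + 3) = M + 3)]
    ring
  rw [hb, hcN, show M + 3 - 2 = M + 1 by omega]
end
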